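/- arXiv:1811.03684 — 2 statements merged into one kernel-verified Lean document; each statement's English description precedes it below -/
import Mathlib

section
/- Let (Ω, F, P) be a probability space, {Θ_y : y ∈ Y} a family of P-preserving measurable bijections of Ω, Q a probability measure on Y, and G : Ω → ℝ≥0 jointly measurable with y. Let ω ~ P and Y ~ Q be independent, and set Ẑ¹ := G(Θ_Y(ω)) and Ẑ² := ∫ G(Θ_y(ω)) Q(dy). Then Ẑ¹ has the same distribution as G(ω) under P, Ẑ² is σ(ω)-measurable, and Ẑ² = E[Ẑ¹ | σ(ω)] almost surely; consequently Ẑ² = E[Ẑ¹ | Ẑ²]. -/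
open MeasureTheory

section aux

variable {Ω Y : Type*} [MeasurableSpace Ω] [MeasurableSpace Y]

/-- Auxiliary: integral of a function of the second coordinate against a product
with a probability measure in the first coordinate. -/
lemma aux_map_snd (Q : Measure Y) [IsProbabilityMeasure Q] [SFinite Q] (ν : Measure Ω) [SFinite ν] :
    Measure.map (Prod.snd : Y × Ω → Ω) (Q.prod ν) = ν := by
  rw [Measure.map_snd_prod]; simp

lemma aux_integral_snd (Q : Measure Y) [IsProbabilityMeasure Q] [SFinite Q]
    (ν : Measure Ω) [SFinite ν] (f : Ω → ℝ) (hf : AEStronglyMeasurable f ν) :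
    ∫ p : Y × Ω, f p.2 ∂(Q.prod ν) = ∫ ω, f ω ∂ν := by
  conv_rhs => rw [← aux_map_snd Q ν]
  rw [integral_map measurable_snd.aemeasurable ((aux_map_snd Q ν).symm ▸ hf)]

end aux

/-- The coupling construction of Theorem 3.1: with `ω ~ P` and `Y ~ Q` independent
(realized on the product space `Y × Ω`), `Ẑ¹ := G(Θ_Y(ω))` has the law of `G(ω)`,
`Ẑ² := ∫ G(Θ_y(ω)) Q(dy)` is `σ(ω)`-measurable, `Ẑ² = E[Ẑ¹ | σ(ω)]` a.s., and
consequently `Ẑ² = E[Ẑ¹ | Ẑ²]` a.s. -/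
theorem stmt7 {Ω Y : Type*} [MeasurableSpace Ω] [MeasurableSpace Y]
    (μ : Measure Ω) [IsProbabilityMeasure μ]
    (Q : Measure Y) [IsProbabilityMeasure Q] [SFinite Q]
    (Θ : Y → Ω → Ω) (hΘ : ∀ y, MeasurePreserving (Θ y) μ μ)
    (hΘbij : ∀ y, Function.Bijective (Θ y))
    (G : Ω → ℝ) (hGnn : ∀ ω, 0 ≤ G ω) (hGmeas : Measurable G)
    (hjoint : Measurable (fun p : Y × Ω => G (Θ p.1 p.2)))
    (hint : Integrable (fun p : Y × Ω => G (Θ p.1 p.2)) (Q.prod μ)) :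
    Measure.map (fun p : Y × Ω => G (Θ p.1 p.2)) (Q.prod μ) = Measure.map G μ ∧
      Measurable[MeasurableSpace.comap (Prod.snd : Y × Ω → Ω) inferInstance]
        (fun p : Y × Ω => ∫ y, G (Θ y p.2) ∂Q) ∧
      (fun p : Y × Ω => ∫ y, G (Θ y p.2) ∂Q) =ᵐ[Q.prod μ]
        (Q.prod μ)[fun p : Y × Ω => G (Θ p.1 p.2) |
          MeasurableSpace.comap (Prod.snd : Y × Ω → Ω) inferInstance] ∧
      (fun p : Y × Ω => ∫ y, G (Θ y p.2) ∂Q) =ᵐ[Q.prod μ]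
        (Q.prod μ)[fun p : Y × Ω => G (Θ p.1 p.2) |
          MeasurableSpace.comap (fun p : Y × Ω => ∫ y, G (Θ y p.2) ∂Q) (borel ℝ)] := by
  have hfsm : StronglyMeasurable (fun ω : Ω => ∫ y, G (Θ y ω) ∂Q) :=
    hjoint.stronglyMeasurable.integral_prod_left'
  have hm : MeasurableSpace.comap (Prod.snd : Y × Ω → Ω) inferInstance
      ≤ (inferInstance : MeasurableSpace (Y × Ω)) :=
    (measurable_snd (α := Y) (β := Ω)).comap_le
  have hsnd : Measurable[MeasurableSpace.comap (Prod.snd : Y × Ω → Ω) inferInstance]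
      (Prod.snd : Y × Ω → Ω) := Measurable.of_comap_le le_rfl
  -- Part 1
  have part1 : Measure.map (fun p : Y × Ω => G (Θ p.1 p.2)) (Q.prod μ)
      = Measure.map G μ := by
    ext s hs
    rw [Measure.map_apply hjoint hs, Measure.map_apply hGmeas hs,
      Measure.prod_apply (hjoint hs)]
    have h : ∀ y : Y,
        μ (Prod.mk y ⁻¹' ((fun p : Y × Ω => G (Θ p.1 p.2)) ⁻¹' s)) = μ (G ⁻¹' s) := by
      intro y
      have he : (Prod.mk y ⁻¹' ((fun p : Y × Ω => G (Θ p.1 p.2)) ⁻¹' s))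
          = Θ y ⁻¹' (G ⁻¹' s) := rfl
      rw [he, (hΘ y).measure_preimage (hGmeas hs).nullMeasurableSet]
    simp [h]
  -- Part 2
  have part2 : Measurable[MeasurableSpace.comap (Prod.snd : Y × Ω → Ω) inferInstance]
      (fun p : Y × Ω => ∫ y, G (Θ y p.2) ∂Q) :=
    hfsm.measurable.comp hsnd
  have hZ2sm : StronglyMeasurable[MeasurableSpace.comap (Prod.snd : Y × Ω → Ω) inferInstance]
      (fun p : Y × Ω => ∫ y, G (Θ y p.2) ∂Q) :=
    hfsm.comp_measurable hsnd
  -- integrability of Z²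
  have hfint : Integrable (fun ω : Ω => ∫ y, G (Θ y ω) ∂Q) μ := hint.integral_prod_right
  have hmp : MeasurePreserving (Prod.snd : Y × Ω → Ω) (Q.prod μ) μ :=
    ⟨measurable_snd, aux_map_snd Q μ⟩
  have hZ2int : Integrable (fun p : Y × Ω => ∫ y, G (Θ y p.2) ∂Q) (Q.prod μ) :=
    (hmp.integrable_comp hfint.aestronglyMeasurable).mpr hfint
  -- Part 3
  have part3 : (fun p : Y × Ω => ∫ y, G (Θ y p.2) ∂Q) =ᵐ[Q.prod μ]
      (Q.prod μ)[fun p : Y × Ω => G (Θ p.1 p.2) |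
        MeasurableSpace.comap (Prod.snd : Y × Ω → Ω) inferInstance] := by
    refine ae_eq_condExp_of_forall_setIntegral_eq hm hint
      (fun s _ _ => hZ2int.integrableOn) (fun s hs _ => ?_)
      hZ2sm.aestronglyMeasurable
    obtain ⟨t, ht, rfl⟩ := hs
    have hres : (Q.prod μ).restrict ((Prod.snd : Y × Ω → Ω) ⁻¹' t)
        = Q.prod (μ.restrict t) := by
      rw [← Set.univ_prod, ← Measure.prod_restrict, Measure.restrict_univ]
    have hgint' : Integrable (fun p : Y × Ω => G (Θ p.1 p.2)) (Q.prod (μ.restrict t)) := by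
      rw [← hres]; exact hint.restrict
    calc ∫ p in (Prod.snd : Y × Ω → Ω) ⁻¹' t, ∫ y, G (Θ y p.2) ∂Q ∂(Q.prod μ)
        = ∫ p : Y × Ω, ∫ y, G (Θ y p.2) ∂Q ∂(Q.prod (μ.restrict t)) := by rw [hres]
      _ = ∫ ω, ∫ y, G (Θ y ω) ∂Q ∂(μ.restrict t) :=
          aux_integral_snd Q (μ.restrict t) _ hfsm.aestronglyMeasurable
      _ = ∫ p : Y × Ω, G (Θ p.1 p.2) ∂(Q.prod (μ.restrict t)) :=
          (integral_prod_symm _ hgint').symm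
      _ = ∫ p in (Prod.snd : Y × Ω → Ω) ⁻¹' t, G (Θ p.1 p.2) ∂(Q.prod μ) := by
          rw [← hres]
  refine ⟨part1, part2, part3, ?_⟩
  -- Part 4
  have hborel : (borel ℝ) = (inferInstance : MeasurableSpace ℝ) :=
    BorelSpace.measurable_eq.symm
  have hm'm : MeasurableSpace.comap (fun p : Y × Ω => ∫ y, G (Θ y p.2) ∂Q) (borel ℝ)
      ≤ MeasurableSpace.comap (Prod.snd : Y × Ω → Ω) inferInstance := by
    rw [hborel]
    have he : (fun p : Y × Ω => ∫ y, G (Θ y p.2) ∂Q)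
        = (fun ω : Ω => ∫ y, G (Θ y ω) ∂Q) ∘ (Prod.snd : Y × Ω → Ω) := rfl
    rw [he, ← MeasurableSpace.comap_comp]
    exact MeasurableSpace.comap_mono hfsm.measurable.comap_le
  have hZ2m' : Measurable[MeasurableSpace.comap
      (fun p : Y × Ω => ∫ y, G (Θ y p.2) ∂Q) (borel ℝ)]
      (fun p : Y × Ω => ∫ y, G (Θ y p.2) ∂Q) := by
    intro s hs
    exact ⟨s, by rwa [hborel], rfl⟩
  have hZ2sm' : StronglyMeasurable[MeasurableSpace.comap
      (fun p : Y × Ω => ∫ y, G (Θ y p.2) ∂Q) (borel ℝ)]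
      (fun p : Y × Ω => ∫ y, G (Θ y p.2) ∂Q) :=
    hZ2m'.stronglyMeasurable
  have hm'amb : MeasurableSpace.comap (fun p : Y × Ω => ∫ y, G (Θ y p.2) ∂Q) (borel ℝ)
      ≤ (inferInstance : MeasurableSpace (Y × Ω)) := hm'm.trans hm
  haveI : SigmaFinite ((Q.prod μ).trim hm'amb) := inferInstance
  calc (fun p : Y × Ω => ∫ y, G (Θ y p.2) ∂Q)
      = (Q.prod μ)[fun p : Y × Ω => ∫ y, G (Θ y p.2) ∂Q |
          MeasurableSpace.comap (fun p : Y × Ω => ∫ y, G (Θ y p.2) ∂Q) (borel ℝ)] :=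
        (condExp_of_stronglyMeasurable (μ := Q.prod μ) hm'amb hZ2sm' hZ2int).symm
    _ =ᵐ[Q.prod μ] (Q.prod μ)[(Q.prod μ)[fun p : Y × Ω => G (Θ p.1 p.2) |
          MeasurableSpace.comap (Prod.snd : Y × Ω → Ω) inferInstance] |
          MeasurableSpace.comap (fun p : Y × Ω => ∫ y, G (Θ y p.2) ∂Q) (borel ℝ)] :=
        condExp_congr_ae part3
    _ =ᵐ[Q.prod μ] (Q.prod μ)[fun p : Y × Ω => G (Θ p.1 p.2) |
          MeasurableSpace.comap (fun p : Y × Ω => ∫ y, G (Θ y p.2) ∂Q) (borel ℝ)] :=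
        condExp_condExp_of_le hm'm hm
end

section
/- Let S_n act on the columns-closed matrix setting of the tree model: for each permutation π of {1,…,K} and each a ∈ {1,…,K}, suppose Ŵ(a, ω(π)) = Ŵ(π⁻¹(a), ω). Define for probability vectors p, q on {1,…,K}: c(π) := ∑_a p(a) Ŵ(a, ω(π)) and d(π) := ∑_a q(a) Ŵ(a, ω(π)), viewed as vectors indexed by permutations π ∈ S_K. If p ⪯_M q then c ⪯_M d. -/
open MeasureTheory Finset

/-- `topSum p k` is the sum of the `k` largest entries of the vector `p`
(the largest sum over index sets of cardinality `k`). -/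
noncomputable def topSum {ι : Type*} [Fintype ι] (p : ι → ℝ) (k : ℕ) : ℝ :=
  sSup {s : ℝ | ∃ A : Finset ι, A.card = k ∧ s = ∑ i ∈ A, p i}

/-- `MajorizedBy p q` : for every `k`, the sum of the `k` largest entries of `p` is at most
that of `q`. Together with equality of total sums this is the majorization order `p ⪯_M q`. -/
def MajorizedBy {ι κ : Type*} [Fintype ι] [Fintype κ] (p : ι → ℝ) (q : κ → ℝ) : Prop :=
  ∀ k : ℕ, topSum p k ≤ topSum q k

lemma topSum_bddAbove {ι : Type*} [Fintype ι] (p : ι → ℝ) (k : ℕ) :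
    BddAbove {s : ℝ | ∃ A : Finset ι, A.card = k ∧ s = ∑ i ∈ A, p i} := by
  apply Set.Finite.bddAbove
  apply Set.Finite.subset (Set.finite_range fun A : Finset ι => ∑ i ∈ A, p i)
  rintro s ⟨A, -, rfl⟩; exact ⟨A, rfl⟩

lemma le_topSum {ι : Type*} [Fintype ι] (p : ι → ℝ) {k : ℕ} {A : Finset ι}
    (hA : A.card = k) : ∑ i ∈ A, p i ≤ topSum p k :=
  le_csSup (topSum_bddAbove p k) ⟨A, hA, rfl⟩

lemma topSum_le {ι : Type*} [Fintype ι] (p : ι → ℝ) {k : ℕ} (hk : k ≤ Fintype.card ι)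
    {M : ℝ} (h : ∀ A : Finset ι, A.card = k → ∑ i ∈ A, p i ≤ M) : topSum p k ≤ M := by
  apply csSup_le
  · obtain ⟨A, -, hA⟩ := Finset.exists_subset_card_eq (s := (univ : Finset ι)) (by simpa using hk)
    exact ⟨_, A, hA, rfl⟩
  · rintro s ⟨A, hA, rfl⟩; exact h A hA

lemma topSum_of_card_lt {ι : Type*} [Fintype ι] (p : ι → ℝ) {k : ℕ}
    (hk : Fintype.card ι < k) : topSum p k = 0 := by
  have : {s : ℝ | ∃ A : Finset ι, A.card = k ∧ s = ∑ i ∈ A, p i} = ∅ := by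
    ext s; simp only [Set.mem_setOf_eq, Set.mem_empty_iff_false, iff_false, not_exists]
    rintro A ⟨hA, -⟩
    exact absurd (hA ▸ Finset.card_le_univ A) (by simpa using hk.not_ge)
  rw [topSum, this, Real.sSup_empty]

lemma strictMono_fin_le {m K : ℕ} {e : Fin m → Fin K} (he : StrictMono e) (i : Fin m) :
    (i : ℕ) ≤ (e i : ℕ) := by
  obtain ⟨n, hn⟩ := i
  induction n with
  | zero => exact Nat.zero_le _
  | succ j ih =>
    have hj : j < m := Nat.lt_of_succ_lt hn
    have h1 : (e ⟨j, hj⟩ : ℕ) < (e ⟨j + 1, hn⟩ : ℕ) := he (by simp [Fin.lt_def])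
    exact Nat.succ_le_of_lt (lt_of_le_of_lt (ih hj) h1)

lemma sum_le_sorted {K m : ℕ} (hm : m ≤ K) (v : Fin K → ℝ) (hv : Antitone v)
    {B : Finset (Fin K)} (hB : B.card = m) :
    ∑ i ∈ B, v i ≤ ∑ i : Fin m, v (Fin.castLE hm i) := by
  have hBmap : B = Finset.univ.map (B.orderEmbOfFin hB).toEmbedding := by
    apply Finset.coe_injective
    rw [Finset.coe_map, Finset.coe_univ, Set.image_univ]
    exact (Finset.range_orderEmbOfFin B hB).symm
  rw [hBmap, Finset.sum_map]
  apply Finset.sum_le_sum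
  intro i _
  apply hv
  simp only [Fin.le_def, Fin.coe_castLE]
  exact strictMono_fin_le (B.orderEmbOfFin hB).strictMono i

lemma antitone_sort_neg {K : ℕ} (v : Fin K → ℝ) :
    Antitone (v ∘ Tuple.sort (-v)) := by
  intro i j hij
  have := Tuple.monotone_sort (-v) hij
  simpa using this

lemma topSum_eq_sorted {K : ℕ} (p : Fin K → ℝ) (σ : Equiv.Perm (Fin K))
    (hs : Antitone (p ∘ σ)) {m : ℕ} (hm : m ≤ K) :
    topSum p m = ∑ i : Fin m, p (σ (Fin.castLE hm i)) := by
  apply le_antisymm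
  · apply topSum_le p (by simpa using hm)
    intro A hA
    have h1 : ∑ i ∈ A, p i = ∑ j ∈ A.image σ.symm, (p ∘ σ) j := by
      rw [Finset.sum_image (fun x _ y _ h => σ.symm.injective h)]
      simp
    have h2 : (A.image σ.symm).card = m := by
      rw [Finset.card_image_of_injective _ σ.symm.injective, hA]
    rw [h1]
    exact sum_le_sorted hm (p ∘ σ) hs h2
  · have hcard : ((Finset.univ.map (Fin.castLEEmb hm)).image σ).card = m := by
      rw [Finset.card_image_of_injective _ σ.injective, Finset.card_map, Finset.card_univ,
        Fintype.card_fin]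
    have := le_topSum p hcard
    rw [Finset.sum_image (fun x _ y _ h => σ.injective h), Finset.sum_map] at this
    simpa using this

/-- The Claim in the proof of Theorem 5.4: equivariance of `Ŵ` under permutations implies
that `π ↦ ∑ₐ p(a) Ŵ(a, ω(π))` is monotone for majorization of the coefficient vectors. -/
theorem stmt18 {K : ℕ} (W : Fin K → Equiv.Perm (Fin K) → ℝ) (hW : ∀ a π, 0 ≤ W a π)
    (hEquiv : ∀ (a : Fin K) (σ π : Equiv.Perm (Fin K)), W (σ a) π = W a (σ⁻¹ * π))
    (p q : Fin K → ℝ) (hp : ∀ a, 0 ≤ p a) (hq : ∀ a, 0 ≤ q a)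
    (hps : ∑ a, p a = 1) (hqs : ∑ a, q a = 1)
    (hmaj : MajorizedBy p q) :
    MajorizedBy (fun π : Equiv.Perm (Fin K) => ∑ a, p a * W a π)
      (fun π : Equiv.Perm (Fin K) => ∑ a, q a * W a π) := by
  have hK : 0 < K := by
    rcases Nat.eq_zero_or_pos K with h | h
    · subst h; simp at hps
    · exact h
  intro k
  by_cases hk : k ≤ Fintype.card (Equiv.Perm (Fin K))
  swap
  · rw [topSum_of_card_lt _ (lt_of_not_ge hk), topSum_of_card_lt _ (lt_of_not_ge hk)]
  apply topSum_le _ hk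
  intro A hA
  set f : Fin K → ℝ := fun a => ∑ π ∈ A, W a π with hfdef
  have hf0 : ∀ a, 0 ≤ f a := fun a => Finset.sum_nonneg fun π _ => hW a π
  set σp := Tuple.sort (-p) with hσp
  set σq := Tuple.sort (-q) with hσq
  set σf := Tuple.sort (-f) with hσf
  have hpa : Antitone (p ∘ σp) := antitone_sort_neg p
  have hqa : Antitone (q ∘ σq) := antitone_sort_neg q
  have hfa : Antitone (f ∘ σf) := antitone_sort_neg f
  have step1 : ∑ π ∈ A, ∑ a, p a * W a π = ∑ a, p a * f a := by
    rw [Finset.sum_comm]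
    simp_rw [← Finset.mul_sum]
    rfl
  have step2 : ∑ a, p a * f a ≤ ∑ i, (p ∘ σp) i * (f ∘ σf) i := by
    have hmono : Monovary (p ∘ σp) (f ∘ σf) := hpa.monovary hfa
    have h := hmono.sum_mul_comp_perm_le_sum_mul (σ := σf⁻¹ * σp)
    calc ∑ a, p a * f a = ∑ i, p (σp i) * f (σp i) :=
          (Equiv.sum_comp σp fun a => p a * f a).symm
      _ = ∑ i, (p ∘ σp) i * (f ∘ σf) ((σf⁻¹ * σp) i) := by
          refine Finset.sum_congr rfl fun i _ => ?_
          simp [Function.comp, Equiv.Perm.mul_apply]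
      _ ≤ ∑ i, (p ∘ σp) i * (f ∘ σf) i := h
  -- Abel summation step
  set P : ℕ → ℝ := fun n => if h : n < K then p (σp ⟨n, h⟩) else 0 with hPdef
  set Q : ℕ → ℝ := fun n => if h : n < K then q (σq ⟨n, h⟩) else 0 with hQdef
  set F : ℕ → ℝ := fun n => if h : n < K then f (σf ⟨n, h⟩) else 0 with hFdef
  have hPsum : ∀ m, (hm : m ≤ K) → ∑ j ∈ range m, P j = topSum p m := by
    intro m hm
    rw [topSum_eq_sorted p σp hpa hm, ← Fin.sum_univ_eq_sum_range]
    refine Finset.sum_congr rfl fun i _ => ?_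
    have hi : (i : ℕ) < K := lt_of_lt_of_le i.isLt hm
    simp only [hPdef, dif_pos hi]
    rfl
  have hQsum : ∀ m, (hm : m ≤ K) → ∑ j ∈ range m, Q j = topSum q m := by
    intro m hm
    rw [topSum_eq_sorted q σq hqa hm, ← Fin.sum_univ_eq_sum_range]
    refine Finset.sum_congr rfl fun i _ => ?_
    have hi : (i : ℕ) < K := lt_of_lt_of_le i.isLt hm
    simp only [hQdef, dif_pos hi]
    rfl
  have step3 : ∑ i, (p ∘ σp) i * (f ∘ σf) i ≤ ∑ i, (q ∘ σq) i * (f ∘ σf) i := by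
    have e1 : ∑ i : Fin K, (p ∘ σp) i * (f ∘ σf) i = ∑ n ∈ range K, F n • P n := by
      rw [← Fin.sum_univ_eq_sum_range (fun n => F n • P n) K]
      refine Finset.sum_congr rfl fun i _ => ?_
      simp only [hPdef, hFdef, dif_pos i.isLt, smul_eq_mul, Fin.eta, Function.comp_apply]
      ring
    have e2 : ∑ i : Fin K, (q ∘ σq) i * (f ∘ σf) i = ∑ n ∈ range K, F n • Q n := by
      rw [← Fin.sum_univ_eq_sum_range (fun n => F n • Q n) K]
      refine Finset.sum_congr rfl fun i _ => ?_
      simp only [hQdef, hFdef, dif_pos i.isLt, smul_eq_mul, Fin.eta, Function.comp_apply]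
      ring
    have hPK : ∑ j ∈ range K, P j = ∑ j ∈ range K, Q j := by
      rw [hPsum K le_rfl, hQsum K le_rfl, topSum_eq_sorted p σp hpa le_rfl,
        topSum_eq_sorted q σq hqa le_rfl]
      have h1 : ∀ i : Fin K, Fin.castLE (le_refl K) i = i := fun i => rfl
      simp only [h1]
      rw [Equiv.sum_comp σp p, Equiv.sum_comp σq q, hps, hqs]
    rw [e1, e2, Finset.sum_range_by_parts F P K, Finset.sum_range_by_parts F Q K, hPK]
    apply sub_le_sub_left
    apply Finset.sum_le_sum
    intro i hi
    rw [Finset.mem_range] at hi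
    have hi1 : i + 1 ≤ K := by omega
    have hiK : i < K := by omega
    have hi1K : i + 1 < K := by omega
    have hFle : F (i + 1) - F i ≤ 0 := by
      have : F (i + 1) ≤ F i := by
        simp only [hFdef, dif_pos hi1K, dif_pos hiK]
        exact hfa (by simp [Fin.le_def])
      linarith
    rw [hPsum (i + 1) hi1, hQsum (i + 1) hi1, smul_eq_mul, smul_eq_mul]
    exact mul_le_mul_of_nonpos_left (hmaj (i + 1)) hFle
  -- back to a subset of permutations, for `q`
  set μ := σf * σq⁻¹ with hμ
  have e3 : ∑ i, (q ∘ σq) i * (f ∘ σf) i = ∑ a, q a * f (μ a) := by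
    rw [← Equiv.sum_comp σq (fun a => q a * f (μ a))]
    refine Finset.sum_congr rfl fun i _ => ?_
    simp [hμ, Function.comp, Equiv.Perm.mul_apply]
  set A' := A.map (Equiv.mulLeft μ⁻¹).toEmbedding with hA'
  have hA'card : A'.card = k := by rw [hA', Finset.card_map, hA]
  have e4 : ∑ a, q a * f (μ a) = ∑ π ∈ A', ∑ a, q a * W a π := by
    rw [Finset.sum_comm]
    refine Finset.sum_congr rfl fun a _ => ?_
    calc q a * f (μ a) = ∑ π ∈ A, q a * W a (μ⁻¹ * π) := by
          rw [hfdef]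
          simp only [Finset.mul_sum]
          exact Finset.sum_congr rfl fun π _ => by rw [← hEquiv a μ π]
      _ = ∑ π ∈ A', q a * W a π := by
          rw [hA', Finset.sum_map]
          simp [Equiv.coe_mulLeft]
  have step4 : ∑ π ∈ A', ∑ a, q a * W a π ≤
      topSum (fun π : Equiv.Perm (Fin K) => ∑ a, q a * W a π) k :=
    le_topSum _ hA'card
  calc ∑ π ∈ A, ∑ a, p a * W a π = ∑ a, p a * f a := step1
    _ ≤ ∑ i, (p ∘ σp) i * (f ∘ σf) i := step2
    _ ≤ ∑ i, (q ∘ σq) i * (f ∘ σf) i := step3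
    _ = ∑ a, q a * f (μ a) := e3
    _ = ∑ π ∈ A', ∑ a, q a * W a π := e4
    _ ≤ _ := step4
end
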